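/- arXiv:math-ph/0510036 — 4 statements merged into one kernel-verified Lean document; each statement's English description precedes it below -/
import Mathlib

section
/- Let Λ : ℂ → Matrix n n ℂ be meromorphic on a connected open set U containing an interval (a,b) ⊂ (0,∞), with Λ(λ) Hermitian for all real λ ∈ (a,b) where Λ is defined. Then the set of λ ∈ (a,b) at which the matrix function λ ↦ √λ·I + i·Λ(λ) fails to be defined or fails to be invertible is discrete in (a,b), and (√λ·I + i·Λ(λ))⁻¹ is meromorphic near (a,b). -/
open Complex Set

/-- The branch of the square root, holomorphic off the negative real axis, positive on
`(0,∞)` (principal branch). -/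
noncomputable def csqrt (z : ℂ) : ℂ := z ^ (1 / 2 : ℂ)

lemma csqrt_analyticAt {z : ℂ} (hz : z ∈ Complex.slitPlane) : AnalyticAt ℂ csqrt z := by
  have h : AnalyticOnNhd ℂ csqrt Complex.slitPlane := by
    apply DifferentiableOn.analyticOnNhd ?_ Complex.isOpen_slitPlane
    intro w hw
    exact (DifferentiableAt.cpow differentiableAt_id (differentiableAt_const _)
      hw).differentiableWithinAt
  exact h z hz

lemma meroSum {ι : Type*} {x : ℂ} (s : Finset ι) (f : ι → ℂ → ℂ)
    (h : ∀ i ∈ s, MeromorphicAt (f i) x) : MeromorphicAt (fun z => ∑ i ∈ s, f i z) x := by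
  classical
  induction s using Finset.induction_on with
  | empty => simpa using MeromorphicAt.const (0 : ℂ) x
  | insert _ _ hni ih =>
    rename_i a s
    simp only [Finset.sum_insert hni]
    exact (h a (Finset.mem_insert_self _ _)).add
      (ih fun i hi => h i (Finset.mem_insert_of_mem hi))

lemma meroProd {ι : Type*} {x : ℂ} (s : Finset ι) (f : ι → ℂ → ℂ)
    (h : ∀ i ∈ s, MeromorphicAt (f i) x) : MeromorphicAt (fun z => ∏ i ∈ s, f i z) x := by
  classical
  induction s using Finset.induction_on with
  | empty => simpa using MeromorphicAt.const (1 : ℂ) x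
  | insert _ _ hni ih =>
    rename_i a s
    simp only [Finset.prod_insert hni]
    exact (h a (Finset.mem_insert_self _ _)).mul
      (ih fun i hi => h i (Finset.mem_insert_of_mem hi))

lemma meroDet {n : ℕ} {A : ℂ → Matrix (Fin n) (Fin n) ℂ} {x : ℂ}
    (h : ∀ i j, MeromorphicAt (fun z => A z i j) x) :
    MeromorphicAt (fun z => (A z).det) x := by
  have hdet : (fun z => (A z).det) =
      fun z => ∑ σ : Equiv.Perm (Fin n), ((Equiv.Perm.sign σ : ℤ) : ℂ) * ∏ i, A z (σ i) i := by
    funext z; rw [Matrix.det_apply']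
  rw [hdet]
  exact meroSum _ _ fun σ _ =>
    (MeromorphicAt.const _ _).mul (meroProd _ _ fun i _ => h (σ i) i)

open Matrix in
open scoped ComplexOrder in
lemma key_isUnit {n : ℕ} {y : ℝ} (hy : 0 < y) {H : Matrix (Fin n) (Fin n) ℂ}
    (hH : H.IsHermitian) :
    IsUnit (csqrt ((y : ℝ) : ℂ) • (1 : Matrix (Fin n) (Fin n) ℂ) + Complex.I • H) := by
  set p : ℝ := y ^ (1 / 2 : ℝ) with hpdef
  have hp0 : 0 < p := Real.rpow_pos_of_pos hy _
  have hcs : csqrt (y : ℂ) = (p : ℂ) := by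
    rw [hpdef, csqrt, Complex.ofReal_cpow hy.le]
    norm_num
  rw [Matrix.isUnit_iff_isUnit_det, isUnit_iff_ne_zero]
  intro hdet
  obtain ⟨v, hv, hMv⟩ := Matrix.exists_mulVec_eq_zero_iff.mpr hdet
  have h0 : dotProduct (star v)
      ((csqrt (y : ℂ) • (1 : Matrix (Fin n) (Fin n) ℂ) + Complex.I • H).mulVec v) = 0 := by
    rw [hMv, dotProduct_zero]
  set s := dotProduct (star v) v with hsdef
  set c := dotProduct (star v) (H.mulVec v) with hcdef
  have hexp : (p : ℂ) * s + Complex.I * c = 0 := by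
    rw [← h0, hcs]
    simp [hsdef, hcdef, Matrix.add_mulVec, Matrix.smul_mulVec, Matrix.one_mulVec,
      dotProduct_add, dotProduct_smul, smul_eq_mul]
  have hs_nonneg : 0 ≤ s := dotProduct_star_self_nonneg v
  have hs_ne : s ≠ 0 := fun h => hv (dotProduct_star_self_eq_zero.mp h)
  obtain ⟨hs_re, hs_im⟩ := Complex.nonneg_iff.mp hs_nonneg
  have hs_re_pos : 0 < s.re := by
    rcases lt_or_eq_of_le hs_re with h | h
    · exact h
    · exact absurd (Complex.ext h.symm hs_im.symm) hs_ne
  have hc_im : c.im = 0 := by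
    have hstar : (starRingEnd ℂ) c = c := by
      calc (starRingEnd ℂ) c = star c := rfl
        _ = star (H.mulVec v) ⬝ᵥ v := by
            rw [hcdef, Matrix.star_dotProduct, star_star]
        _ = (star v ᵥ* Hᴴ) ⬝ᵥ v := by rw [Matrix.star_mulVec]
        _ = star v ⬝ᵥ Hᴴ.mulVec v := by rw [dotProduct_mulVec]
        _ = c := by rw [hH.eq]
    exact Complex.conj_eq_iff_im.mp hstar
  have hre := congrArg Complex.re hexp
  simp only [Complex.add_re, Complex.mul_re, Complex.ofReal_re, Complex.ofReal_im,
    Complex.I_re, Complex.I_im, hc_im, zero_mul, mul_zero, sub_zero, one_mul,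
    zero_sub, Complex.zero_re] at hre
  nlinarith [mul_pos hp0 hs_re_pos]

/-- Let `Λ` be meromorphic (entrywise) on a connected open set `U ⊆ ℂ` avoiding
the negative real axis and containing an interval `(a,b) ⊂ (0,∞)`, with `Λ(λ)` Hermitian at
every `λ ∈ (a,b)` where `Λ` is defined (i.e. analytic). Then the set of `λ ∈ (a,b)` at which
`√λ·I + i·Λ(λ)` fails to be defined or fails to be invertible is discrete in `(a,b)`, and
`(√λ·I + i·Λ(λ))⁻¹` is meromorphic near `(a,b)` (indeed on `U`). -/
theorem hermitian_meromorphic_inverse_discrete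
    {n : ℕ} (U : Set ℂ) (hU : IsOpen U) (hconn : IsConnected U)
    (a b : ℝ) (ha : 0 < a) (hab : a < b)
    (hsub : (fun x : ℝ => (x : ℂ)) '' Ioo a b ⊆ U)
    (hslit : U ⊆ Complex.slitPlane)
    (Λ : ℂ → Matrix (Fin n) (Fin n) ℂ)
    (hmero : ∀ i j, MeromorphicOn (fun z => Λ z i j) U)
    (hherm : ∀ x ∈ Ioo a b, (∀ i j, AnalyticAt ℂ (fun z => Λ z i j) ((x : ℝ) : ℂ)) →
      (Λ ((x : ℝ) : ℂ)).IsHermitian) :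
    (∀ x ∈ Ioo a b, ¬ AccPt x (Filter.principal {y ∈ Ioo a b |
      ¬ ((∀ i j, AnalyticAt ℂ (fun z => Λ z i j) ((y : ℝ) : ℂ)) ∧
        IsUnit (csqrt ((y : ℝ) : ℂ) • (1 : Matrix (Fin n) (Fin n) ℂ)
          + Complex.I • Λ ((y : ℝ) : ℂ)))})) ∧
    ∀ i j, MeromorphicOn
      (fun z => (csqrt z • (1 : Matrix (Fin n) (Fin n) ℂ) + Complex.I • Λ z)⁻¹ i j) U := by
  set M : ℂ → Matrix (Fin n) (Fin n) ℂ :=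
    fun z => csqrt z • (1 : Matrix (Fin n) (Fin n) ℂ) + Complex.I • Λ z with hMdef
  -- entries of M are meromorphic on U
  have hMentry : ∀ i j, MeromorphicOn (fun z => M z i j) U := by
    intro i j z hz
    have h1 : MeromorphicAt (fun z => csqrt z * (1 : Matrix (Fin n) (Fin n) ℂ) i j) z :=
      (csqrt_analyticAt (hslit hz)).meromorphicAt.mul (MeromorphicAt.const _ z)
    have h2 : MeromorphicAt (fun z => Complex.I * Λ z i j) z :=
      (MeromorphicAt.const _ z).mul (hmero i j z hz)
    have heq : (fun z => M z i j) =
        fun z => csqrt z * (1 : Matrix (Fin n) (Fin n) ℂ) i j + Complex.I * Λ z i j := by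
      funext w
      simp [hMdef, Matrix.add_apply, Matrix.smul_apply, smul_eq_mul]
    rw [heq]
    exact h1.add h2
  -- determinant is meromorphic on U
  have hDet : MeromorphicOn (fun z => (M z).det) U :=
    fun z hz => meroDet fun i j => hMentry i j z hz
  constructor
  · -- discreteness
    intro x hx hacc
    have hxU : ((x : ℝ) : ℂ) ∈ U := hsub ⟨x, hx, rfl⟩
    have hDx : MeromorphicAt (fun z => (M z).det) ((x : ℝ) : ℂ) := hDet _ hxU
    -- eventually the entries of Λ are analytic on a punctured neighborhood
    have hev_an : ∀ᶠ z in nhdsWithin ((x : ℝ) : ℂ) {((x : ℝ) : ℂ)}ᶜ,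
        ∀ i j, AnalyticAt ℂ (fun w => Λ w i j) z := by
      rw [Filter.eventually_all]
      intro i
      rw [Filter.eventually_all]
      intro j
      exact (hmero i j _ hxU).eventually_analyticAt
    -- the real line approaches x within the punctured complex neighborhood
    have htends : Filter.Tendsto (fun y : ℝ => (y : ℂ)) (nhdsWithin x {x}ᶜ)
        (nhdsWithin ((x : ℝ) : ℂ) {((x : ℝ) : ℂ)}ᶜ) := by
      rw [tendsto_nhdsWithin_iff]
      constructor
      · exact (Complex.continuous_ofReal.tendsto x).mono_left nhdsWithin_le_nhds
      · filter_upwards [self_mem_nhdsWithin] with y hy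
        simpa [Complex.ofReal_inj] using hy
    have hIoo : ∀ᶠ y in nhdsWithin x {x}ᶜ, y ∈ Ioo a b :=
      nhdsWithin_le_nhds (Ioo_mem_nhds hx.1 hx.2)
    rcases eq_or_ne (meromorphicOrderAt (fun z => (M z).det) ((x : ℝ) : ℂ)) ⊤ with hord | hord
    · -- determinant vanishes identically near x : contradiction with Hermitian invertibility
      have hzero : ∀ᶠ z in nhdsWithin ((x : ℝ) : ℂ) {((x : ℝ) : ℂ)}ᶜ, (M z).det = 0 :=
        meromorphicOrderAt_eq_top_iff.mp hord
      have hfin : ∀ᶠ y in nhdsWithin x {x}ᶜ, y ∈ Ioo a b ∧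
          (∀ i j, AnalyticAt ℂ (fun w => Λ w i j) ((y : ℝ) : ℂ)) ∧
          (M ((y : ℝ) : ℂ)).det = 0 := by
        filter_upwards [hIoo, htends.eventually hev_an, htends.eventually hzero]
          with y h1 h2 h3
        exact ⟨h1, h2, h3⟩
      obtain ⟨y, hy1, hy2, hy3⟩ := hfin.exists
      have hU : IsUnit (M ((y : ℝ) : ℂ)) := key_isUnit (lt_trans ha hy1.1) (hherm y hy1 hy2)
      rw [Matrix.isUnit_iff_isUnit_det, isUnit_iff_ne_zero] at hU
      exact hU hy3
    · -- determinant is eventually nonzero on a punctured neighborhood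
      obtain ⟨m, hm⟩ := WithTop.ne_top_iff_exists.mp hord
      obtain ⟨g, hg_an, hg_ne, hg_eq⟩ := (meromorphicOrderAt_eq_int_iff hDx).mp hm.symm
      have hg_ne' : ∀ᶠ z in nhdsWithin ((x : ℝ) : ℂ) {((x : ℝ) : ℂ)}ᶜ, g z ≠ 0 :=
        nhdsWithin_le_nhds (hg_an.continuousAt.eventually_ne hg_ne)
      have hne : ∀ᶠ z in nhdsWithin ((x : ℝ) : ℂ) {((x : ℝ) : ℂ)}ᶜ, (M z).det ≠ 0 := by
        filter_upwards [hg_eq, hg_ne', self_mem_nhdsWithin] with z h1 h2 h3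
        rw [h1]
        exact smul_ne_zero (zpow_ne_zero _ (sub_ne_zero.mpr h3)) h2
      have hgood : ∀ᶠ y in nhdsWithin x {x}ᶜ, y ∉ {y ∈ Ioo a b |
          ¬ ((∀ i j, AnalyticAt ℂ (fun z => Λ z i j) ((y : ℝ) : ℂ)) ∧
            IsUnit (csqrt ((y : ℝ) : ℂ) • (1 : Matrix (Fin n) (Fin n) ℂ)
              + Complex.I • Λ ((y : ℝ) : ℂ)))} := by
        filter_upwards [htends.eventually hev_an, htends.eventually hne] with y h1 h2
        intro hmem
        exact hmem.2 ⟨h1, (Matrix.isUnit_iff_isUnit_det _).mpr (isUnit_iff_ne_zero.mpr h2)⟩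
      have : nhdsWithin x {x}ᶜ ⊓ Filter.principal _ = ⊥ :=
        Filter.inf_principal_eq_bot.mpr hgood
      exact hacc.ne this
  · -- meromorphy of the inverse
    intro i j z hz
    have hD : MeromorphicAt (fun z => (M z).det) z := hDet z hz
    have hAdj : MeromorphicAt (fun z => (M z).adjugate i j) z := by
      have heq : (fun z => (M z).adjugate i j) =
          fun z => ((M z).updateRow j (Pi.single i 1)).det := by
        funext w; rw [Matrix.adjugate_apply]
      rw [heq]
      apply meroDet
      intro k l
      by_cases hk : k = j
      · simp only [hk, Matrix.updateRow_apply, if_pos rfl]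
        exact MeromorphicAt.const _ z
      · simp only [Matrix.updateRow_apply, if_neg hk]
        exact hMentry k l z hz
    have heq : (fun z => (csqrt z • (1 : Matrix (Fin n) (Fin n) ℂ) + Complex.I • Λ z)⁻¹ i j) =
        fun z => ((M z).det)⁻¹ * (M z).adjugate i j := by
      funext w
      show (M w)⁻¹ i j = ((M w).det)⁻¹ * (M w).adjugate i j
      rw [Matrix.inv_def, Matrix.smul_apply, smul_eq_mul, Ring.inverse_eq_inv]
    rw [heq]
    exact hD.inv.mul hAdj
end

section
/- Let H be a self-adjoint operator on a Hilbert space and D a dense set of vectors such that for every f ∈ D, the function λ ↦ ⟨(H − λ)⁻¹ f, f⟩ defined on the upper half-plane extends analytically through every point of an open interval (a,b) ⊂ ℝ except a discrete set S ⊂ (a,b). Then H has no singular continuous spectrum in (a,b). -/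
open MeasureTheory Complex Set
open scoped InnerProductSpace NNReal ENNReal

/-- If a finite measure on `ℝ` satisfies a linear bound on small closed balls centered in `N`,
then it vanishes on `N` whenever `N` is Lebesgue-null. -/
lemma null_of_closedBall_bound (ν : Measure ℝ) [IsFiniteMeasure ν] (δ M : ℝ) (hδ : 0 < δ)
    (hM : 0 ≤ M) (N : Set ℝ)
    (hb : ∀ t ∈ N, ∀ r : ℝ, 0 < r → r < δ → ν (Metric.closedBall t r) ≤ ENNReal.ofReal (M * r))
    (hN : volume N = 0) : ν N = 0 := by
  have key : ∀ η : ℝ≥0, 0 < η → ν N ≤ ENNReal.ofReal M * η := by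
    intro η hη
    -- choose an open superset of small volume
    obtain ⟨U, hNU, hUopen, hUvol⟩ : ∃ U ⊇ N, IsOpen U ∧ volume U < (η : ℝ≥0∞) := by
      apply Set.exists_isOpen_lt_of_lt
      simpa [hN] using (ENNReal.coe_pos.mpr hη)
    have hUne : Uᶜ.Nonempty := by
      rcases Set.eq_empty_or_nonempty Uᶜ with h | h
      · exfalso
        have hU : U = Set.univ := by simpa [Set.compl_empty_iff] using h
        rw [hU, Real.volume_univ] at hUvol
        exact (not_lt.mpr le_top) hUvol
      · exact h
    set R : ℝ → ℝ := fun x => min δ (Metric.infDist x Uᶜ) with hR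
    have hRpos : ∀ x ∈ N, 0 < R x := by
      intro x hx
      refine lt_min hδ ?_
      exact (hUopen.isClosed_compl.notMem_iff_infDist_pos hUne).mp (by simpa using hNU hx)
    obtain ⟨t, r, htc, hts, hrmem, hcov, hdisj⟩ :=
      Besicovitch.exists_disjoint_closedBall_covering_ae ν (fun _ => Set.Ioi 0) N
        (fun x _ δ' hδ' => ⟨δ' / 2, by simp [hδ'], by simp [hδ'], by simpa using hδ'⟩) R hRpos
    have hballU : ∀ x ∈ t, Metric.closedBall x (r x) ⊆ U := by
      intro x hx
      have h1 : r x < Metric.infDist x Uᶜ := lt_of_lt_of_le (hrmem x hx).2.2 (min_le_right _ _)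
      exact (Metric.closedBall_subset_ball h1).trans Metric.ball_infDist_compl_subset
    have hsum : ν N ≤ ∑' x : t, ν (Metric.closedBall x (r x)) := by
      calc ν N ≤ ν ((N \ ⋃ x ∈ t, Metric.closedBall x (r x))
            ∪ ⋃ x ∈ t, Metric.closedBall x (r x)) :=
          measure_mono (Set.subset_diff_union N _)
      _ ≤ ν (N \ ⋃ x ∈ t, Metric.closedBall x (r x))
            + ν (⋃ x ∈ t, Metric.closedBall x (r x)) := measure_union_le _ _
      _ ≤ 0 + ∑' x : t, ν (Metric.closedBall x (r x)) :=
          add_le_add (le_of_eq hcov) (measure_biUnion_le ν htc _)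
      _ = _ := by rw [zero_add]
    have hterm : ∀ x : t, ν (Metric.closedBall x (r x))
        ≤ ENNReal.ofReal M * volume (Metric.closedBall (x : ℝ) (r x)) := by
      intro ⟨x, hx⟩
      have hrx : 0 < r x := (hrmem x hx).2.1
      have hrδ : r x < δ := lt_of_lt_of_le (hrmem x hx).2.2 (min_le_left _ _)
      calc ν (Metric.closedBall x (r x)) ≤ ENNReal.ofReal (M * r x) :=
            hb x (hts hx) (r x) hrx hrδ
        _ ≤ ENNReal.ofReal M * ENNReal.ofReal (2 * r x) := by
            rw [← ENNReal.ofReal_mul hM]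
            exact ENNReal.ofReal_le_ofReal (by nlinarith)
        _ = _ := by rw [Real.volume_closedBall]
    calc ν N ≤ ∑' x : t, ν (Metric.closedBall x (r x)) := hsum
      _ ≤ ∑' x : t, ENNReal.ofReal M * volume (Metric.closedBall (x : ℝ) (r x)) :=
          ENNReal.tsum_le_tsum hterm
      _ = ENNReal.ofReal M * ∑' x : t, volume (Metric.closedBall (x : ℝ) (r x)) :=
          ENNReal.tsum_mul_left
      _ = ENNReal.ofReal M * volume (⋃ x ∈ t, Metric.closedBall x (r x)) := by
          rw [measure_biUnion htc hdisj (fun x _ => Metric.isClosed_closedBall.measurableSet)]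
      _ ≤ ENNReal.ofReal M * volume U := by
          gcongr
          exact Set.iUnion₂_subset hballU
      _ ≤ ENNReal.ofReal M * η := mul_le_mul_right hUvol.le _
  refine le_antisymm ?_ (zero_le)
  refine ENNReal.le_of_forall_pos_le_add fun ε hε _ => ?_
  rcases eq_or_lt_of_le hM with hM0 | hMpos
  · have := key 1 one_pos
    simpa [← hM0] using this.trans (by simp [← hM0])
  · set η : ℝ≥0 := ⟨ε / (M + 1), by positivity⟩ with hηdef
    have hηpos : 0 < η := by
      rw [← NNReal.coe_lt_coe, hηdef]
      have : (0:ℝ) < ε / (M+1) := by positivity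
      exact this
    have := key η hηpos
    refine this.trans ?_
    rw [zero_add]
    have : ENNReal.ofReal M * η ≤ ENNReal.ofReal ((M) * (ε / (M+1))) := by
      rw [ENNReal.ofReal_mul hM]
      gcongr
      · simp [hηdef, ENNReal.ofReal, Real.toNNReal, NNReal.coe_mk]
        exact ENNReal.coe_le_coe.mpr (NNReal.coe_le_coe.mp (le_max_left (ε / (M + 1) : ℝ) 0))
    refine this.trans ?_
    have hle : M * (ε / (M+1)) ≤ ε := by
      rw [div_eq_inv_mul, ← mul_assoc]
      have h1 : M * (M+1)⁻¹ ≤ 1 := by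
        rw [mul_inv_le_iff₀ (by positivity)]
        linarith
      nlinarith [ε.coe_nonneg]
    calc ENNReal.ofReal (M * (ε / (M+1))) ≤ ENNReal.ofReal ε := ENNReal.ofReal_le_ofReal hle
      _ = ε := by simp

/-- If the Borel transform of a finite measure `ν` extends analytically through a real point
`x`, then `ν` is absolutely continuous w.r.t. Lebesgue measure near `x`. -/
lemma borel_transform_local (ν : Measure ℝ) [IsFiniteMeasure ν] (x ε : ℝ) (hε : 0 < ε)
    (F : ℂ → ℂ) (hF : DifferentiableOn ℂ F (Metric.ball ((x : ℝ) : ℂ) ε))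
    (hFeq : ∀ z ∈ Metric.ball ((x : ℝ) : ℂ) ε, 0 < z.im →
      F z = ∫ t : ℝ, ((t : ℂ) - z)⁻¹ ∂ν) :
    ∃ δ > 0, ∀ N : Set ℝ, N ⊆ Metric.ball x δ → volume N = 0 → ν N = 0 := by
  obtain ⟨C, hC⟩ := (isCompact_closedBall ((x : ℝ) : ℂ) (ε/2)).exists_bound_of_continuousOn
    (hF.continuousOn.mono (Metric.closedBall_subset_ball (by linarith)))
  set M : ℝ := max C 0 with hMdef
  have hM0 : 0 ≤ M := le_max_right _ _
  refine ⟨ε/8, by positivity, ?_⟩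
  intro N hNsub hNvol
  refine null_of_closedBall_bound ν (ε/8) (2*M) (by positivity) (by positivity) N ?_ hNvol
  intro t ht r hr hrδ
  have htx : |t - x| < ε/8 := by
    have := hNsub ht
    rwa [Metric.mem_ball, Real.dist_eq] at this
  set z : ℂ := (t : ℂ) + (r : ℂ) * Complex.I with hzdef
  have hzre : z.re = t := by simp [hzdef]
  have hzim : z.im = r := by simp [hzdef]
  have hz2 : z ∈ Metric.closedBall ((x : ℝ) : ℂ) (ε/2) := by
    rw [Metric.mem_closedBall, Complex.dist_eq]
    refine le_trans (Complex.norm_le_abs_re_add_abs_im _) ?_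
    have h1 : (z - (x : ℂ)).re = t - x := by simp [hzdef]
    have h2 : (z - (x : ℂ)).im = r := by simp [hzdef]
    rw [h1, h2, abs_of_pos hr]
    have := abs_nonneg (t - x)
    linarith
  have hz1 : z ∈ Metric.ball ((x : ℝ) : ℂ) ε :=
    Metric.closedBall_subset_ball (by linarith) hz2
  have hFz : F z = ∫ s : ℝ, ((s : ℂ) - z)⁻¹ ∂ν := hFeq z hz1 (by rw [hzim]; exact hr)
  set g : ℝ → ℝ := fun s => r / ((s - t)^2 + r^2) with hgdef
  have hsubim : ∀ s : ℝ, ((s : ℂ) - z).im = -r := by intro s; simp [hzdef]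
  have hsubre : ∀ s : ℝ, ((s : ℂ) - z).re = s - t := by intro s; simp [hzdef]
  have him : ∀ s : ℝ, (((s : ℂ) - z)⁻¹).im = g s := by
    intro s
    show _ = r / ((s - t)^2 + r^2)
    rw [Complex.inv_im, Complex.normSq_apply, hsubre, hsubim]
    ring
  have hgnonneg : ∀ s : ℝ, 0 ≤ g s := by
    intro s
    have hden : 0 < (s - t)^2 + r^2 := by positivity
    positivity
  have hcontf : Continuous fun s : ℝ => ((s : ℂ) - z)⁻¹ := by
    refine Continuous.inv₀ (Complex.continuous_ofReal.sub continuous_const) ?_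
    intro s hs0
    have := congrArg Complex.im hs0
    rw [hsubim s] at this
    simp at this
    exact absurd this (ne_of_gt hr)
  have hintgr : Integrable (fun s : ℝ => ((s : ℂ) - z)⁻¹) ν := by
    refine Integrable.mono' (integrable_const r⁻¹) hcontf.aestronglyMeasurable ?_
    refine Filter.Eventually.of_forall fun s => ?_
    rw [norm_inv]
    refine inv_anti₀ hr ?_
    calc r = |((s : ℂ) - z).im| := by rw [hsubim, abs_neg, abs_of_pos hr]
      _ ≤ ‖(s : ℂ) - z‖ := Complex.abs_im_le_norm _
      _ = ‖(s : ℂ) - z‖ := rfl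
  have hgcont : Continuous g := by
    refine continuous_const.div (by fun_prop) fun s => ?_
    positivity
  have hgint : Integrable g ν := by
    refine Integrable.mono' (integrable_const r⁻¹) hgcont.aestronglyMeasurable ?_
    refine Filter.Eventually.of_forall fun s => ?_
    rw [Real.norm_eq_abs, _root_.abs_of_nonneg (hgnonneg s)]
    show r / ((s - t)^2 + r^2) ≤ r⁻¹
    rw [inv_eq_one_div, div_le_div_iff₀ (by positivity) hr]
    nlinarith
  have himF : (F z).im = ∫ s : ℝ, g s ∂ν := by
    have e : ∀ w : ℂ, (RCLike.im w : ℝ) = w.im := congrFun RCLike.im_eq_complex_im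
    rw [hFz, ← e, ← integral_im hintgr]
    refine integral_congr_ae (Filter.Eventually.of_forall fun s => ?_)
    show RCLike.im ((s : ℂ) - z)⁻¹ = g s
    rw [e ((s : ℂ) - z)⁻¹]
    exact him s
  have hFM : (F z).im ≤ M := by
    calc (F z).im ≤ |(F z).im| := le_abs_self _
      _ ≤ ‖F z‖ := Complex.abs_im_le_norm _
      _ = ‖F z‖ := rfl
      _ ≤ C := hC z hz2
      _ ≤ M := le_max_left _ _
  have hlow : 1/(2*r) * (ν (Metric.closedBall t r)).toReal
      ≤ ∫ s in Metric.closedBall t r, g s ∂ν := by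
    refine setIntegral_ge_of_const_le_real Metric.isClosed_closedBall.measurableSet
      (measure_ne_top ν _) ?_ (hgint.integrableOn)
    intro s hs
    rw [Metric.mem_closedBall, Real.dist_eq] at hs
    have hs2 : (s - t)^2 ≤ r^2 := by nlinarith [abs_nonneg (s - t), _root_.sq_abs (s - t)]
    show 1/(2*r) ≤ r / ((s - t)^2 + r^2)
    rw [div_le_div_iff₀ (by positivity) (by positivity)]
    nlinarith
  have hup : ∫ s in Metric.closedBall t r, g s ∂ν ≤ M := by
    calc ∫ s in Metric.closedBall t r, g s ∂ν ≤ ∫ s : ℝ, g s ∂ν :=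
        setIntegral_le_integral hgint (Filter.Eventually.of_forall hgnonneg)
      _ = (F z).im := himF.symm
      _ ≤ M := hFM
  have htoReal : (ν (Metric.closedBall t r)).toReal ≤ 2*M*r := by
    have h := hlow.trans hup
    have hrpos : 0 < 2*r := by linarith
    have h2 : (2*r) * (1/(2*r)) = 1 := by field_simp
    have h3 := mul_le_mul_of_nonneg_left h hrpos.le
    rw [← mul_assoc, h2, one_mul] at h3
    have h4 : 2*r*M = 2*M*r := by ring
    linarith
  calc ν (Metric.closedBall t r)
      = ENNReal.ofReal (ν (Metric.closedBall t r)).toReal :=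
        (ENNReal.ofReal_toReal (measure_ne_top ν _)).symm
    _ ≤ ENNReal.ofReal (2*M*r) := ENNReal.ofReal_le_ofReal htoReal


/-- A measure has no singular continuous part on `s` if every Lebesgue-null subset of `s`,
with the atoms removed, has measure zero. -/
def NoSingularContinuousOn (μ : Measure ℝ) (s : Set ℝ) : Prop :=
  ∀ B : Set ℝ, B ⊆ s → MeasurableSet B → volume B = 0 →
    μ (B \ {x : ℝ | μ {x} ≠ 0}) = 0

/-- Let `H` be a self-adjoint operator on a Hilbert space with spectral
measures `μ f` (so `⟨(H − λ)⁻¹ f, f⟩` is the Borel transform of `μ f` for `Im λ > 0`), and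
`D` a dense set of vectors such that for every `f ∈ D`, the map
`λ ↦ ⟨(H − λ)⁻¹ f, f⟩` extends analytically through every point of `(a,b)` except a discrete
set `S`. Then `H` has no singular continuous spectrum in `(a,b)`: every spectral measure
`μ f` has no singular continuous part there. -/
theorem no_singular_continuous_spectrum_of_limiting_absorption
    {E : Type*} [NormedAddCommGroup E] [InnerProductSpace ℂ E] [CompleteSpace E]
    (H : E →L[ℂ] E) (hH : IsSelfAdjoint H)
    (μ : E → Measure ℝ) (hfin : ∀ f, IsFiniteMeasure (μ f))
    (hquad : ∀ f : E, ∀ B : Set ℝ, μ f B ≤ ENNReal.ofReal (‖f‖ ^ 2))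
    (htri : ∀ f g : E, ∀ B : Set ℝ, μ (f + g) B ≤ 2 * (μ f B + μ g B))
    (hres : ∀ f : E, ∀ lam : ℂ, 0 < lam.im →
      ⟪(Ring.inverse (H - lam • (1 : E →L[ℂ] E))) f, f⟫_ℂ
        = ∫ t : ℝ, ((t : ℂ) - lam)⁻¹ ∂(μ f))
    (D : Set E) (hD : Dense D)
    (a b : ℝ)
    (S : Set ℝ) (hS : S ⊆ Ioo a b)
    (hSdisc : ∀ x ∈ Ioo a b, ¬ AccPt x (Filter.principal S))
    (hcont : ∀ f ∈ D, ∀ x ∈ Ioo a b \ S, ∃ ε > (0 : ℝ), ∃ F : ℂ → ℂ,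
      DifferentiableOn ℂ F (Metric.ball ((x : ℝ) : ℂ) ε) ∧
      ∀ z ∈ Metric.ball ((x : ℝ) : ℂ) ε, 0 < z.im →
        F z = ∫ t : ℝ, ((t : ℂ) - z)⁻¹ ∂(μ f)) :
    ∀ f : E, NoSingularContinuousOn (μ f) (Ioo a b) := by
  intro f
  intro B hBsub hBmeas hBvol
  -- S is countable
  have hScount : S.Countable := by
    have hdisc : DiscreteTopology S := by
      refine discreteTopology_subtype_iff.mpr fun x hx => ?_
      exact Filter.not_neBot.mp (hSdisc x (hS hx))
    have : Countable ↥S := TopologicalSpace.separableSpace_iff_countable.mp inferInstance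
    exact Set.countable_coe_iff.mp this
  -- Step 1: for g ∈ D, μ g vanishes on Lebesgue-null subsets of (a,b) \ S
  have key : ∀ g ∈ D, (μ g) (B \ S) = 0 := by
    intro g hg
    haveI := hfin g
    have hloc : ∀ x : (Ioo a b \ S : Set ℝ), ∃ δ > 0,
        ∀ N : Set ℝ, N ⊆ Metric.ball (x : ℝ) δ → volume N = 0 → μ g N = 0 := by
      rintro ⟨x, hx⟩
      obtain ⟨ε, hε, F, hF1, hF2⟩ := hcont g hg x hx
      exact borel_transform_local (μ g) x ε hε F hF1 hF2
    choose δ hδpos hδ using hloc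
    obtain ⟨T, hTc, hTU⟩ := TopologicalSpace.isOpen_iUnion_countable
      (fun i : (Ioo a b \ S : Set ℝ) => Metric.ball (i : ℝ) (δ i))
      (fun i => Metric.isOpen_ball)
    have hcover : B \ S ⊆ ⋃ i ∈ T, Metric.ball (i : ℝ) (δ i) := by
      rw [hTU]
      intro y hy
      have hyV : y ∈ Ioo a b \ S := ⟨hBsub hy.1, hy.2⟩
      exact Set.mem_iUnion.mpr ⟨⟨y, hyV⟩, Metric.mem_ball_self (hδpos ⟨y, hyV⟩)⟩
    refine le_antisymm ?_ (zero_le)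
    calc μ g (B \ S) ≤ μ g (⋃ i ∈ T, (B \ S) ∩ Metric.ball (i : ℝ) (δ i)) := by
          refine measure_mono fun y hy => ?_
          obtain ⟨i, hiT, hyi⟩ := Set.mem_iUnion₂.mp (hcover hy)
          exact Set.mem_iUnion₂.mpr ⟨i, hiT, hy, hyi⟩
      _ ≤ ∑' i : T, μ g ((B \ S) ∩ Metric.ball ((i : (Ioo a b \ S : Set ℝ)) : ℝ) (δ i)) :=
          measure_biUnion_le _ hTc _
      _ = 0 := by
          refine ENNReal.tsum_eq_zero.mpr fun i => ?_
          refine hδ i _ Set.inter_subset_right ?_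
          exact measure_mono_null (Set.inter_subset_left.trans Set.diff_subset) hBvol
  -- Step 2: μ f vanishes on B \ S by density
  have key2 : μ f (B \ S) = 0 := by
    have hbound : ∀ ε : ℝ, 0 < ε → μ f (B \ S) ≤ ENNReal.ofReal ε := by
      intro ε hε
      obtain ⟨g, hgD, hgdist⟩ := Metric.mem_closure_iff.mp (hD f) (Real.sqrt (ε/2))
        (Real.sqrt_pos.mpr (by linarith))
      have hsplit := htri (f - g) g (B \ S)
      rw [sub_add_cancel] at hsplit
      have h1 : μ (f - g) (B \ S) ≤ ENNReal.ofReal (‖f - g‖^2) := hquad (f - g) _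
      have h2 : ‖f - g‖^2 ≤ ε/2 := by
        have h3 : ‖f - g‖ < Real.sqrt (ε/2) := by rwa [← dist_eq_norm]
        nlinarith [norm_nonneg (f - g), Real.sq_sqrt (by linarith : (0:ℝ) ≤ ε/2),
          Real.sqrt_nonneg (ε/2)]
      calc μ f (B \ S) ≤ 2 * (μ (f - g) (B \ S) + μ g (B \ S)) := hsplit
        _ = 2 * μ (f - g) (B \ S) := by rw [key g hgD, add_zero]
        _ ≤ 2 * ENNReal.ofReal (ε/2) :=
            mul_le_mul_right (h1.trans (ENNReal.ofReal_le_ofReal h2)) _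
        _ = ENNReal.ofReal 2 * ENNReal.ofReal (ε/2) := by rw [ENNReal.ofReal_ofNat]
        _ = ENNReal.ofReal (2 * (ε/2)) := (ENNReal.ofReal_mul (by norm_num)).symm
        _ = ENNReal.ofReal ε := by congr 1; ring
    refine le_antisymm ?_ (zero_le)
    refine ENNReal.le_of_forall_pos_le_add fun ε' hε' _ => ?_
    rw [zero_add]
    calc μ f (B \ S) ≤ ENNReal.ofReal ε' := hbound ε' (by exact_mod_cast hε')
      _ = (ε' : ℝ≥0∞) := ENNReal.ofReal_coe_nnreal
  -- Step 3: combine with atoms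
  have hsub : B \ {x : ℝ | μ f {x} ≠ 0} ⊆ (B \ S) ∪ ((B ∩ S) \ {x : ℝ | μ f {x} ≠ 0}) := by
    intro y hy
    by_cases hyS : y ∈ S
    · exact Or.inr ⟨⟨hy.1, hyS⟩, hy.2⟩
    · exact Or.inl ⟨hy.1, hyS⟩
  refine measure_mono_null hsub (measure_union_null key2 ?_)
  have hc : ((B ∩ S) \ {x : ℝ | μ f {x} ≠ 0}).Countable :=
    (hScount.mono Set.inter_subset_right).mono Set.diff_subset
  rw [← Set.biUnion_of_singleton ((B ∩ S) \ {x : ℝ | μ f {x} ≠ 0})]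
  refine (measure_biUnion_null_iff hc).mpr fun y hy => ?_
  have := hy.2
  simpa using not_not.mp (by simpa using this)
end

section
/- Let H be a self-adjoint operator and f a vector such that sup{ |⟨(H − λ − iε)⁻¹ f, f⟩| : a ≤ λ ≤ b, 0 < ε < 1 } < ∞. Then the spectral measure μ_f of H associated with f gives zero mass to every subset of (a,b) of Lebesgue measure zero intersected with the complement of the atoms; in particular μ_f restricted to (a,b) has no singular continuous part. -/
open MeasureTheory Complex Set
open scoped InnerProductSpace

open scoped ENNReal


lemma borel_bound (μ : Measure ℝ) [IsFiniteMeasure μ] (x ε C : ℝ) (hε : 0 < ε)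
    (hC : ‖∫ t : ℝ, ((t : ℂ) - ((x : ℂ) + (ε : ℂ) * Complex.I))⁻¹ ∂μ‖ ≤ C) :
    μ (Icc (x - ε) (x + ε)) ≤ ENNReal.ofReal (2 * C * ε) := by
  set z : ℂ := (x : ℂ) + (ε : ℂ) * Complex.I with hz
  have him_t : ∀ t : ℝ, ((t : ℂ) - z).im = -ε := by intro t; simp [hz]
  have hne : ∀ t : ℝ, (t : ℂ) - z ≠ 0 := by
    intro t h
    have := him_t t
    rw [h] at this
    simp at this
    linarith
  have hcont : Continuous fun t : ℝ => ((t : ℂ) - z)⁻¹ :=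
    (Complex.continuous_ofReal.sub continuous_const).inv₀ hne
  have hbound : ∀ t : ℝ, ‖((t : ℂ) - z)⁻¹‖ ≤ ε⁻¹ := by
    intro t
    rw [norm_inv]
    apply inv_anti₀ hε
    calc ε = |((t:ℂ) - z).im| := by rw [him_t t]; rw [abs_neg, abs_of_pos hε]
    _ ≤ ‖(t:ℂ) - z‖ := Complex.abs_im_le_norm _
    _ = ‖(t:ℂ) - z‖ := rfl
  have hint : Integrable (fun t : ℝ => ((t : ℂ) - z)⁻¹) μ :=
    Integrable.mono' (integrable_const ε⁻¹) hcont.aestronglyMeasurable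
      (Filter.Eventually.of_forall hbound)
  have him : ∀ t : ℝ, (((t : ℂ) - z)⁻¹).im = ε / ((t - x)^2 + ε^2) := by
    intro t
    rw [Complex.inv_im]
    have h1 : ((t:ℂ) - z).im = -ε := him_t t
    have h2 : ((t:ℂ) - z).re = t - x := by simp [hz]
    rw [Complex.normSq_apply, h1, h2]
    ring
  have hg_int : Integrable (fun t : ℝ => ε / ((t - x)^2 + ε^2)) μ := by
    refine hint.im.congr (Filter.Eventually.of_forall fun t => ?_)
    exact him t
  have hg_nonneg : ∀ t : ℝ, 0 ≤ ε / ((t - x)^2 + ε^2) := by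
    intro t; positivity
  have h1 : ∫ t, ε / ((t - x)^2 + ε^2) ∂μ ≤ C := by
    have heq : ∫ t, ε / ((t - x)^2 + ε^2) ∂μ = (∫ t, ((t : ℂ) - z)⁻¹ ∂μ).im := by
      rw [show (∫ t, ((t : ℂ) - z)⁻¹ ∂μ).im
          = RCLike.im (∫ t : ℝ, ((t : ℂ) - z)⁻¹ ∂μ) from rfl, ← integral_im hint]
      congr 1; ext t; exact (him t).symm
    rw [heq]
    calc (∫ t, ((t : ℂ) - z)⁻¹ ∂μ).im ≤ |(∫ t, ((t : ℂ) - z)⁻¹ ∂μ).im| := le_abs_self _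
    _ ≤ ‖∫ t, ((t : ℂ) - z)⁻¹ ∂μ‖ := Complex.abs_im_le_norm _
    _ ≤ C := hC
  have hlow : ∀ t ∈ Icc (x - ε) (x + ε), (2 * ε)⁻¹ ≤ ε / ((t - x)^2 + ε^2) := by
    intro t ht
    rw [Set.mem_Icc] at ht
    have h2 : (t - x)^2 ≤ ε^2 := by
      have habs : |t - x| ≤ ε := abs_le.mpr ⟨by linarith [ht.1], by linarith [ht.2]⟩
      calc (t-x)^2 = |t-x|^2 := (_root_.sq_abs _).symm
      _ ≤ ε^2 := by apply pow_le_pow_left₀ (abs_nonneg _) habs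
    have key : ε / (2 * ε^2) ≤ ε / ((t - x)^2 + ε^2) := by
      apply div_le_div_of_nonneg_left hε.le (by positivity) (by linarith)
    calc (2 * ε)⁻¹ = ε / (2 * ε^2) := by field_simp
    _ ≤ _ := key
  -- now the measure bound
  have hmeas : MeasurableSet (Icc (x - ε) (x + ε)) := measurableSet_Icc
  have h3 : (μ (Icc (x - ε) (x + ε))).toReal * (2 * ε)⁻¹ ≤ C := by
    calc (μ (Icc (x - ε) (x + ε))).toReal * (2 * ε)⁻¹
        = ∫ _ in Icc (x - ε) (x + ε), (2 * ε)⁻¹ ∂μ := by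
          rw [setIntegral_const]; rfl
    _ ≤ ∫ t in Icc (x - ε) (x + ε), ε / ((t - x)^2 + ε^2) ∂μ := by
          apply setIntegral_mono_on (integrableOn_const (measure_ne_top μ _))
            (hg_int.integrableOn) hmeas hlow
    _ ≤ ∫ t, ε / ((t - x)^2 + ε^2) ∂μ :=
          setIntegral_le_integral hg_int (Filter.Eventually.of_forall hg_nonneg)
    _ ≤ C := h1
  have h4 : (μ (Icc (x - ε) (x + ε))).toReal ≤ 2 * C * ε := by
    have h2ε : (0:ℝ) < 2 * ε := by linarith
    have hm := mul_le_mul_of_nonneg_right h3 h2ε.le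
    rw [mul_assoc, inv_mul_cancel₀ h2ε.ne', mul_one] at hm
    linarith
  calc μ (Icc (x - ε) (x + ε)) = ENNReal.ofReal ((μ (Icc (x - ε) (x + ε))).toReal) := by
        rw [ENNReal.ofReal_toReal (measure_ne_top μ _)]
  _ ≤ ENNReal.ofReal (2 * C * ε) := ENNReal.ofReal_le_ofReal h4


lemma null_of_icc_bound (μ : Measure ℝ) [IsFiniteMeasure μ] (a b C : ℝ) (hC : 0 ≤ C)
    (hball : ∀ x ∈ Icc a b, ∀ ε ∈ Ioo (0:ℝ) 1,
      μ (Icc (x - ε) (x + ε)) ≤ ENNReal.ofReal (2 * C * ε))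
    (B : Set ℝ) (hB : B ⊆ Ioo a b) (hvol : volume B = 0) : μ B = 0 := by
  have key : ∀ δ : ℝ≥0∞, 0 < δ → μ B ≤ ENNReal.ofReal (2 * C) * δ := by
    intro δ hδ
    obtain ⟨U, hBU, hUopen, hUvol⟩ :=
      Set.exists_isOpen_lt_of_lt (μ := volume) B δ (by simpa [hvol] using hδ)
    have hRex : ∀ x ∈ B, ∃ R, 0 < R ∧ Metric.closedBall x R ⊆ U := by
      intro x hx
      rcases Metric.isOpen_iff.1 hUopen x (hBU hx) with ⟨ρ, hρ, hρU⟩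
      exact ⟨ρ / 2, by linarith,
        (Metric.closedBall_subset_ball (by linarith)).trans hρU⟩
    choose! R hR0 hRU using hRex
    obtain ⟨t, r, htc, htB, hr, hcov, hdisj⟩ :=
      Besicovitch.exists_disjoint_closedBall_covering_ae μ (fun _ => Ioo 0 1) B
        (fun x _ δ' hδ' => ⟨min δ' 1 / 2,
          ⟨⟨by positivity, by
              have := min_le_right δ' 1; linarith⟩,
           ⟨by positivity, by
              have := min_le_left δ' 1; linarith⟩⟩⟩) R hR0
    have hball_sub : ∀ x ∈ t, Metric.closedBall x (r x) ⊆ U := fun x hx =>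
      (Metric.closedBall_subset_closedBall (le_of_lt (hr x hx).2.2)).trans (hRU x (htB hx))
    have hmeasb : ∀ x ∈ t, μ (Metric.closedBall x (r x)) ≤
        ENNReal.ofReal (2 * C) * volume (Metric.closedBall x (r x)) := by
      intro x hx
      have hx' : x ∈ Icc a b := Ioo_subset_Icc_self (hB (htB hx))
      have hrx : r x ∈ Ioo (0:ℝ) 1 := (hr x hx).1
      have h1 := hball x hx' (r x) hrx
      rw [Real.closedBall_eq_Icc, Real.volume_Icc]
      calc μ (Icc (x - r x) (x + r x)) ≤ ENNReal.ofReal (2 * C * r x) := h1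
      _ ≤ ENNReal.ofReal (2 * C) * ENNReal.ofReal (x + r x - (x - r x)) := by
          rw [← ENNReal.ofReal_mul (by linarith : (0:ℝ) ≤ 2 * C)]
          exact ENNReal.ofReal_le_ofReal (by nlinarith [hrx.1.le])
    calc μ B ≤ μ (B ∩ ⋃ x ∈ t, Metric.closedBall x (r x))
            + μ (B \ ⋃ x ∈ t, Metric.closedBall x (r x)) := measure_le_inter_add_diff μ B _
    _ = μ (B ∩ ⋃ x ∈ t, Metric.closedBall x (r x)) := by rw [hcov, add_zero]
    _ ≤ μ (⋃ x ∈ t, Metric.closedBall x (r x)) := measure_mono inter_subset_right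
    _ ≤ ∑' x : t, μ (Metric.closedBall (x : ℝ) (r x)) := measure_biUnion_le μ htc _
    _ ≤ ∑' x : t, ENNReal.ofReal (2 * C) * volume (Metric.closedBall (x : ℝ) (r x)) :=
        ENNReal.tsum_le_tsum fun x => hmeasb x x.2
    _ = ENNReal.ofReal (2 * C) * ∑' x : t, volume (Metric.closedBall (x : ℝ) (r x)) :=
        ENNReal.tsum_mul_left
    _ = ENNReal.ofReal (2 * C) * volume (⋃ x ∈ t, Metric.closedBall x (r x)) := by
        rw [measure_biUnion htc hdisj fun x _ => measurableSet_closedBall]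
    _ ≤ ENNReal.ofReal (2 * C) * volume U := by
        gcongr
        exact iUnion₂_subset hball_sub
    _ ≤ ENNReal.ofReal (2 * C) * δ := mul_le_mul_right hUvol.le _
  refine le_antisymm (ENNReal.le_of_forall_pos_le_add fun ε hε _ => ?_) zero_le
  rw [zero_add]
  set D := ENNReal.ofReal (2 * C) + 1 with hD
  have hD0 : D ≠ 0 := by simp [hD]
  have hDtop : D ≠ ⊤ := by simp [hD]; exact ENNReal.mul_ne_top (by simp) ENNReal.ofReal_ne_top
  have hδ : (0:ℝ≥0∞) < ε / D := ENNReal.div_pos (by exact_mod_cast hε.ne') hDtop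
  calc μ B ≤ ENNReal.ofReal (2 * C) * (ε / D) := key _ hδ
  _ ≤ D * (ε / D) := by gcongr; exact le_self_add
  _ = ε := ENNReal.mul_div_cancel hD0 hDtop

/-- Let `H` be self-adjoint, `f` a vector, and `μ` the spectral measure of `H`
associated with `f` (so `⟨(H − z)⁻¹ f, f⟩ = ∫ (t − z)⁻¹ dμ(t)` for `Im z > 0`). If
`sup { |⟨(H − λ − iε)⁻¹ f, f⟩| : a ≤ λ ≤ b, 0 < ε < 1 } < ∞`, then `μ` gives zero mass to
every Lebesgue-null subset of `(a,b)` intersected with the complement of the atoms; in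
particular `μ` has no singular continuous part on `(a,b)`. -/
theorem spectral_measure_no_sc_of_bounded_resolvent
    {E : Type*} [NormedAddCommGroup E] [InnerProductSpace ℂ E] [CompleteSpace E]
    (H : E →L[ℂ] E) (hH : IsSelfAdjoint H) (f : E)
    (μ : Measure ℝ) [IsFiniteMeasure μ]
    (hres : ∀ z : ℂ, 0 < z.im →
      ⟪(Ring.inverse (H - z • (1 : E →L[ℂ] E))) f, f⟫_ℂ
        = ∫ t : ℝ, ((t : ℂ) - z)⁻¹ ∂μ)
    (a b : ℝ)
    (hbdd : ∃ C : ℝ, ∀ lam ∈ Icc a b, ∀ ε ∈ Ioo (0 : ℝ) 1,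
      ‖⟪(Ring.inverse (H - ((lam : ℂ) + (ε : ℂ) * Complex.I) • (1 : E →L[ℂ] E))) f, f⟫_ℂ‖
        ≤ C) :
    NoSingularContinuousOn μ (Ioo a b) := by
  intro B hB hBmeas hBvol
  rcases le_or_gt b a with hba | hab
  · have : B = ∅ := subset_empty_iff.mp (by rwa [Ioo_eq_empty_of_le hba] at hB)
    simp [this]
  obtain ⟨C, hCb⟩ := hbdd
  have hC0 : 0 ≤ max C 0 := le_max_right _ _
  have hball : ∀ x ∈ Icc a b, ∀ ε ∈ Ioo (0:ℝ) 1,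
      μ (Icc (x - ε) (x + ε)) ≤ ENNReal.ofReal (2 * max C 0 * ε) := by
    intro x hx ε hε
    apply borel_bound μ x ε (max C 0) hε.1
    rw [← hres ((x : ℂ) + (ε : ℂ) * Complex.I) (by simp [hε.1])]
    exact le_trans (hCb x hx ε hε) (le_max_left _ _)
  have hμB : μ B = 0 := null_of_icc_bound μ a b (max C 0) hC0 hball B hB hBvol
  exact le_antisymm (le_trans (measure_mono diff_subset) hμB.le) zero_le
end

section
/- Let μ be a finite positive Borel measure on ℝ whose Borel transform F(z) = ∫ (t − z)⁻¹ dμ(t) satisfies sup{ |F(λ + iε)| : λ ∈ [a,b], 0 < ε < 1 } < ∞. Then μ has no singular continuous part on (a,b). -/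
open MeasureTheory Complex Set

open scoped ENNReal NNReal

section BorelTransformAux

open Metric


lemma ball_est (μ : Measure ℝ) [IsFiniteMeasure μ] {C lam ε : ℝ} (hC : 0 ≤ C)
    (hε : ε ∈ Ioo (0:ℝ) 1)
    (hb : ‖∫ t : ℝ, ((t : ℂ) - ((lam : ℂ) + (ε : ℂ) * Complex.I))⁻¹ ∂μ‖ ≤ C) :
    μ (closedBall lam ε) ≤ (C.toNNReal • (volume : Measure ℝ)) (closedBall lam ε) := by
  obtain ⟨hε0, hε1⟩ := hε
  set w : ℂ := (lam : ℂ) + (ε : ℂ) * Complex.I with hw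
  set f : ℝ → ℂ := fun t : ℝ => ((t : ℂ) - w)⁻¹ with hf
  have him : w.im = ε := by simp [hw]
  have hre : w.re = lam := by simp [hw]
  have hne : ∀ t : ℝ, (t : ℂ) - w ≠ 0 := by
    intro t h
    have : ((t : ℂ) - w).im = 0 := by rw [h]; simp
    simp [him] at this; linarith
  have hcont : Continuous f :=
    ((Complex.continuous_ofReal.sub continuous_const).inv₀ hne)
  have hint : Integrable f μ := by
    refine (integrable_const (1/ε)).mono' hcont.aestronglyMeasurable ?_
    filter_upwards with t
    rw [norm_inv, one_div]
    apply inv_anti₀ hε0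
    calc ε = |((t:ℂ) - w).im| := by simp [him, abs_of_pos hε0]
      _ ≤ ‖(t:ℂ) - w‖ := Complex.abs_im_le_norm _
  -- imaginary part formula
  have him_eq : ∀ t : ℝ, (f t).im = ε / ((t - lam)^2 + ε^2) := by
    intro t
    rw [hf]
    simp only [Complex.inv_im]
    have h1 : ((t:ℂ) - w).im = -ε := by simp [him]
    have h2 : Complex.normSq ((t:ℂ) - w) = (t - lam)^2 + ε^2 := by
      rw [Complex.normSq_apply]
      simp [hre, him]; ring
    rw [h1, h2]; ring
  have him_nonneg : ∀ t : ℝ, 0 ≤ (f t).im := by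
    intro t
    rw [him_eq t]
    positivity
  -- integral of im ≤ C
  have hintim : Integrable (fun t => (f t).im) μ := hint.im
  have h1 : ∫ t, (f t).im ∂μ ≤ C := by
    have heq : ∫ t, (f t).im ∂μ = (∫ t, f t ∂μ).im := by
      simpa using integral_im (𝕜 := ℂ) hint
    rw [heq]
    calc (∫ t, f t ∂μ).im ≤ |(∫ t, f t ∂μ).im| := le_abs_self _
      _ ≤ ‖∫ t, f t ∂μ‖ := Complex.abs_im_le_norm _
      _ ≤ C := hb
  -- lower bound on the set
  have hμcb : μ (closedBall lam ε) ≠ ⊤ := measure_ne_top μ _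
  have h2 : (1 / (2*ε)) * (μ (closedBall lam ε)).toReal ≤ ∫ t in closedBall lam ε, (f t).im ∂μ := by
    apply setIntegral_ge_of_const_le_real measurableSet_closedBall hμcb
    · intro t ht
      rw [him_eq t]
      rw [Real.closedBall_eq_Icc] at ht
      have habs : (t - lam)^2 ≤ ε^2 := by
        have : |t - lam| ≤ ε := by rw [abs_le]; constructor <;> [linarith [ht.1]; linarith [ht.2]]
        calc (t-lam)^2 = |t-lam|^2 := by rw [_root_.sq_abs]
          _ ≤ ε^2 := by gcongr
      rw [div_le_div_iff₀ (by positivity) (by positivity)]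
      nlinarith
    · exact hintim.integrableOn
  have h3 : ∫ t in closedBall lam ε, (f t).im ∂μ ≤ ∫ t, (f t).im ∂μ :=
    setIntegral_le_integral hintim (Filter.Eventually.of_forall him_nonneg)
  have key : (μ (closedBall lam ε)).toReal ≤ C * (2*ε) := by
    have := le_trans h2 (le_trans h3 h1)
    rw [div_mul_eq_mul_div, one_mul, div_le_iff₀ (by positivity)] at this
    linarith
  rw [Measure.smul_apply, Real.volume_closedBall, ENNReal.smul_def, smul_eq_mul,
    ← ENNReal.ofReal_toReal hμcb]
  calc ENNReal.ofReal (μ (closedBall lam ε)).toReal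
      ≤ ENNReal.ofReal (C * (2*ε)) := ENNReal.ofReal_le_ofReal key
    _ = (C.toNNReal : ℝ≥0∞) * ENNReal.ofReal (2*ε) := by
        rw [ENNReal.ofReal_mul hC, ENNReal.ofReal, Real.toNNReal]

end BorelTransformAux

/-- If `μ` is a finite positive Borel measure on `ℝ` whose Borel transform
`F(z) = ∫ (t − z)⁻¹ dμ(t)` is uniformly bounded on `{λ + iε : λ ∈ [a,b], 0 < ε < 1}`, then
`μ` has no singular continuous part on `(a,b)`. -/
theorem measure_no_sc_of_bounded_borel_transform
    (μ : Measure ℝ) [IsFiniteMeasure μ] (a b : ℝ)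
    (hbdd : ∃ C : ℝ, ∀ lam ∈ Icc a b, ∀ ε ∈ Ioo (0 : ℝ) 1,
      ‖∫ t : ℝ, ((t : ℂ) - ((lam : ℂ) + (ε : ℂ) * Complex.I))⁻¹ ∂μ‖ ≤ C) :
    NoSingularContinuousOn μ (Ioo a b) := by
  intro B hBsub hBmeas hBvol
  obtain ⟨C, hC⟩ := hbdd
  set C' : ℝ := max C 0 with hC'def
  have hC'nonneg : 0 ≤ C' := le_max_right C 0
  set ν : Measure ℝ := C'.toNNReal • (volume : Measure ℝ) with hν
  have hμB : μ B = 0 := by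
    have hle : μ B ≤ ν B := by
      apply VitaliFamily.measure_le_of_frequently_le (v := Besicovitch.vitaliFamily μ)
        ν Measure.AbsolutelyContinuous.rfl B
      intro x hx
      have hx' : x ∈ Icc a b := Ioo_subset_Icc_self (hBsub hx)
      apply (Besicovitch.tendsto_filterAt μ x).frequently
      have hev : ∀ᶠ r in nhdsWithin 0 (Ioi (0:ℝ)),
          μ (Metric.closedBall x r) ≤ ν (Metric.closedBall x r) := by
        filter_upwards [Ioo_mem_nhdsGT_of_mem ⟨le_rfl, one_pos⟩] with r hr
        exact ball_est μ hC'nonneg hr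
          ((hC x hx' r hr).trans (le_max_left C 0))
      exact hev.frequently
    have : ν B = 0 := by
      rw [hν, Measure.smul_apply, hBvol, smul_zero]
    exact le_antisymm (hle.trans this.le) zero_le
  exact measure_mono_null diff_subset hμB
end
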